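/- Let F be a field, V an infinite-dimensional F-vector space, V* its dual, V̄ = V ⊕ V*, and q the quadratic form on V̄ given by q(a,α) = α(a). Then there exists a generator W of the quadric S_q (a maximal totally q-singular subspace of V̄) with W ∩ (V ⊕ 0) = 0 and W + (V ⊕ 0) a proper subspace of V̄; that is, S_q admits a generator opposite to the generator V ⊕ 0 which is not a complement of it. (Concretely, for a basis (e_i)_{i∈I} of V and functionals η_i ∈ V* satisfying η_i(e_i) = 0 and η_i(e_j) + η_j(e_i) = 0 for all i, j — obtained from a partition of the infinite index set I into pairs — the subspace W = span{(e_i, η_i) : i ∈ I} works.) -/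

import Mathlib

/-- The quadratic form `q(a,α) = α(a)` on `V̄ = V ⊕ V*`. -/
def quadForm {F V : Type*} [Field F] [AddCommGroup V] [Module F V]
    (p : V × Module.Dual F V) : F :=
  p.2 p.1

/-- A totally `q`-singular subspace of `V̄`. -/
def QTotSing {F V : Type*} [Field F] [AddCommGroup V] [Module F V]
    (W : Submodule F (V × Module.Dual F V)) : Prop :=
  ∀ w ∈ W, quadForm w = 0

/-- A generator of the quadric `S_q`: a maximal totally `q`-singular subspace. -/
def QGen {F V : Type*} [Field F] [AddCommGroup V] [Module F V]
    (W : Submodule F (V × Module.Dual F V)) : Prop :=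
  QTotSing W ∧
    ∀ W' : Submodule F (V × Module.Dual F V), QTotSing W' → W ≤ W' → W' = W

/-- The quadric `S_q` admits a generator which is opposite to, but not a
complement of, the generator `V ⊕ 0`. -/
theorem stmt_16 {F V : Type*} [Field F] [AddCommGroup V] [Module F V]
    (hV : ¬ Module.Finite F V) :
    ∃ W : Submodule F (V × Module.Dual F V), QGen W ∧
      W ⊓ (⊤ : Submodule F V).prod (⊥ : Submodule F (Module.Dual F V)) = ⊥ ∧
      W ⊔ (⊤ : Submodule F V).prod (⊥ : Submodule F (Module.Dual F V)) ≠ ⊤ := by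
  classical
  set ι := Module.Free.ChooseBasisIndex F V with hι
  set b : Module.Basis ι F V := Module.Free.chooseBasis F V with hb
  have hinf : Infinite ι := by
    rw [← not_finite_iff_infinite]
    intro h
    exact hV (Module.Finite.of_basis b)
  obtain ⟨e⟩ : Nonempty (ι ⊕ ι ≃ ι) := by
    rw [← Cardinal.eq]
    simp [Cardinal.add_eq_self (Cardinal.aleph0_le_mk ι)]
  set σ : ι → ι := fun i => e ((e.symm i).swap) with hσ
  have hσσ : ∀ i, σ (σ i) = i := by
    intro i; simp [hσ, Sum.swap_swap]
  have hσne : ∀ i, σ i ≠ i := by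
    intro i h
    have := congrArg e.symm h
    simp only [hσ, Equiv.symm_apply_apply] at this
    rcases h' : e.symm i with a | a <;> rw [h'] at this <;> simp at this
  set ε : ι → F := fun i => if (e.symm i).isLeft then 1 else -1 with hε'
  have hε : ∀ i, ε i + ε (σ i) = 0 := by
    intro i
    simp only [hε', hσ, Equiv.symm_apply_apply]
    rcases h' : e.symm i with a | a <;> simp
  have hε0 : ∀ i, ε i ≠ 0 := by
    intro i
    simp only [hε']
    split <;> simp
  set η : ι → Module.Dual F V := fun i => ε i • b.coord (σ i) with hη'
  have hη : ∀ i x, η i x = ε i * b.repr x (σ i) := by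
    intro i x; simp [hη', Module.Basis.coord_apply]
  have hηb : ∀ i j, η i (b j) = if j = σ i then ε i else 0 := by
    intro i j
    rw [hη, Module.Basis.repr_self, Finsupp.single_apply]
    split <;> simp_all
  set N : V →ₗ[F] Module.Dual F V := b.constr F η with hN'
  have hNb : ∀ j, N (b j) = η j := fun j => b.constr_basis F η j
  have hN : ∀ x j, N x (b j) = ε (σ j) * b.repr x (σ j) := by
    intro x j
    rw [hN', Module.Basis.constr_apply, Finsupp.sum, LinearMap.sum_apply]
    have : ∀ i ∈ (b.repr x).support,
        (b.repr x i • η i) (b j) = if i = σ j then b.repr x i * ε i else 0 := by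
      intro i _
      rw [LinearMap.smul_apply, smul_eq_mul, hηb]
      by_cases h : i = σ j
      · subst h; rw [if_pos (hσσ j).symm, if_pos rfl]
      · rw [if_neg h, if_neg, mul_zero]
        intro hc; exact h (by rw [hc, hσσ])
    rw [Finset.sum_congr rfl this, Finset.sum_ite_eq' (b.repr x).support (σ j)]
    split
    · ring
    · rw [Finsupp.notMem_support_iff.mp (by assumption), mul_zero]
  have hNq : ∀ x, N x x = 0 := by
    intro x
    rw [hN', Module.Basis.constr_apply, Finsupp.sum, LinearMap.sum_apply]
    set c := b.repr x with hc
    have hterm : ∀ i, (c i • η i) x = c i * (ε i * c (σ i)) := by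
      intro i; rw [LinearMap.smul_apply, smul_eq_mul, hη]
    set f : ι → F := fun i => c i * (ε i * c (σ i)) with hf
    rw [Finset.sum_congr rfl (fun i _ => hterm i)]
    set t : Finset ι := c.support ∪ c.support.image σ with ht
    have hsub : c.support ⊆ t := Finset.subset_union_left
    rw [Finset.sum_subset hsub (by
      intro i _ hi
      rw [Finsupp.notMem_support_iff.mp hi, zero_mul])]
    have gmem : ∀ a ∈ t, σ a ∈ t := by
      intro a ha
      rw [ht, Finset.mem_union] at ha ⊢
      rcases ha with ha | ha
      · exact Or.inr (Finset.mem_image_of_mem σ ha)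
      · obtain ⟨a', ha', rfl⟩ := Finset.mem_image.mp ha
        exact Or.inl (by rwa [hσσ])
    exact Finset.sum_involution (fun a _ => σ a)
      (fun a ha => by
        have h1 := hε a
        have : c (σ (σ a)) = c a := by rw [hσσ]
        rw [this]; linear_combination (c a * c (σ a)) * h1)
      (fun a ha _ => hσne a) gmem (fun a ha => hσσ a)
  set L : (V →ₗ[F] V × Module.Dual F V) := LinearMap.prod LinearMap.id N with hL
  have hLx : ∀ x, L x = (x, N x) := fun x => rfl
  refine ⟨LinearMap.range L, ⟨?_, ?_⟩, ?_, ?_⟩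
  · rintro w ⟨x, rfl⟩
    show N x x = 0
    exact hNq x
  · intro W' hW' hle
    refine le_antisymm ?_ hle
    rintro ⟨a, α⟩ hw
    have hvW : ∀ j, (b j, η j) ∈ LinearMap.range L := by
      intro j; exact ⟨b j, by rw [hLx, hNb]⟩
    have key : ∀ j, α (b j) = N a (b j) := by
      intro j
      have h1 : quadForm ((a, α) + (b j, η j)) = 0 :=
        hW' _ (W'.add_mem hw (hle (hvW j)))
      have h2 : quadForm (a, α) = 0 := hW' _ hw
      have h3 : η j (b j) = 0 := by
        rw [hηb, if_neg (fun h => hσne j h.symm)]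
      simp only [quadForm, Prod.fst_add, Prod.snd_add, LinearMap.add_apply,
        map_add] at h1 h2
      have h4 : α (b j) = - η j a := by linear_combination h1 - h2 - h3
      rw [h4, hN, hη]
      have h5 : ε (σ j) = - ε j := by linear_combination hε j
      rw [h5]; ring
    have : α = N a := b.ext fun j => key j
    exact ⟨a, by rw [hLx, this]⟩
  · rw [eq_bot_iff]
    rintro p hp
    rw [Submodule.mem_inf] at hp
    obtain ⟨⟨x, rfl⟩, hp2⟩ := hp
    rw [Submodule.mem_prod] at hp2
    have hNx : N x = 0 := hp2.2
    have hx : x = 0 := by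
      have : ∀ j, b.repr x j = 0 := by
        intro j
        have := hN x (σ j)
        rw [hNx, hσσ] at this
        exact (mul_eq_zero.mp this.symm).resolve_left (hε0 j)
      have : b.repr x = 0 := Finsupp.ext this
      simpa using congrArg (b.repr.symm) this
    rw [hLx, hx]
    simp
  · intro htop
    set φ : Module.Dual F V := b.constr F (fun _ => (1:F)) with hφ
    have hmem : ((0 : V), φ) ∈
        LinearMap.range L ⊔ (⊤ : Submodule F V).prod (⊥ : Submodule F (Module.Dual F V)) := by
      rw [htop]; trivial
    obtain ⟨y, ⟨x, rfl⟩, z, hz, hsum⟩ := Submodule.mem_sup.mp hmem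
    rw [Submodule.mem_prod] at hz
    have hz2 : z.2 = 0 := hz.2
    have hNφ : N x = φ := by
      have := congrArg Prod.snd hsum
      simp only [hLx, Prod.snd_add, hz2, add_zero] at this
      exact this
    obtain ⟨j, hj⟩ := Infinite.exists_notMem_finset ((b.repr x).support.image σ)
    have hcj : b.repr x (σ j) = 0 := by
      rw [← Finsupp.notMem_support_iff]
      intro hc
      exact hj (Finset.mem_image.mpr ⟨σ j, hc, hσσ j⟩)
    have h1 : N x (b j) = 0 := by rw [hN, hcj, mul_zero]
    have h2 : φ (b j) = 1 := b.constr_basis F _ j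
    rw [hNφ, h2] at h1
    exact one_ne_zero h1
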